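/- Let n ≥ 2 be a natural number and r > 0. Write points of ℝ^{n+1} as (x₁, x') with x₁ ∈ ℝ, x' ∈ ℝⁿ, and let C_r := {(x₁, x') : |x₁| ≤ r, |x'| ≤ r} be the closed solid cylinder. Let u : ([−r, r] \ {0}) × S^{n−1} → ℝ be a continuous function with 0 < u(x₁, ω) < r for all (x₁, ω), and suppose that sup_{ω ∈ S^{n−1}} u(x₁, ω)/|x₁| → 0 as x₁ → 0. Define the pinched cylindrical graph M := {(x₁, u(x₁, ω)·ω) : 0 < |x₁| ≤ r, ω ∈ S^{n−1}} ∪ {0} ⊂ ℝ^{n+1}. Then the two axis points p₋ := (−r/2, 0) and p₊ := (r/2, 0) belong to C_r \ M and lie in different connected components of C_r \ M. -/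

import Mathlib

open Set Filter Metric

lemma ball_sep {X : Type*} [MetricSpace X] {s A : Set X} {a b : X}
    (hAs : A ⊆ s) (ha : a ∈ A) (hb : b ∈ s) (hbA : b ∉ A)
    (hA : ∀ p ∈ A, ∃ ε > 0, ball p ε ∩ s ⊆ A)
    (hB : ∀ p ∈ s \ A, ∃ ε > 0, ball p ε ∩ s ⊆ s \ A) :
    b ∉ connectedComponentIn s a := by
  intro hbC
  choose ε₁ hε₁ hsub₁ using hA
  choose ε₂ hε₂ hsub₂ using hB
  set U : Set X := ⋃ (p : X) (hp : p ∈ A), ball p (ε₁ p hp) with hU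
  set V : Set X := ⋃ (p : X) (hp : p ∈ s \ A), ball p (ε₂ p hp) with hV
  have hUopen : IsOpen U := isOpen_iUnion fun p => isOpen_iUnion fun _ => isOpen_ball
  have hVopen : IsOpen V := isOpen_iUnion fun p => isOpen_iUnion fun _ => isOpen_ball
  have hC : IsPreconnected (connectedComponentIn s a) := isPreconnected_connectedComponentIn
  have hCs : connectedComponentIn s a ⊆ s := connectedComponentIn_subset s a
  have hcover : connectedComponentIn s a ⊆ U ∪ V := by
    intro x hx
    by_cases hxA : x ∈ A
    · exact Or.inl (mem_iUnion.2 ⟨x, mem_iUnion.2 ⟨hxA, mem_ball_self (hε₁ x hxA)⟩⟩)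
    · exact Or.inr (mem_iUnion.2 ⟨x, mem_iUnion.2 ⟨⟨hCs hx, hxA⟩, mem_ball_self (hε₂ x ⟨hCs hx, hxA⟩)⟩⟩)
  have haC : a ∈ connectedComponentIn s a := mem_connectedComponentIn (hAs ha)
  have hne1 : (connectedComponentIn s a ∩ U).Nonempty :=
    ⟨a, haC, mem_iUnion.2 ⟨a, mem_iUnion.2 ⟨ha, mem_ball_self (hε₁ a ha)⟩⟩⟩
  have hne2 : (connectedComponentIn s a ∩ V).Nonempty :=
    ⟨b, hbC, mem_iUnion.2 ⟨b, mem_iUnion.2 ⟨⟨hb, hbA⟩, mem_ball_self (hε₂ b ⟨hb, hbA⟩)⟩⟩⟩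
  obtain ⟨x, hxC, hxU, hxV⟩ := hC U V hUopen hVopen hcover hne1 hne2
  obtain ⟨p, hp⟩ := mem_iUnion.1 hxU
  obtain ⟨hpA, hxball⟩ := mem_iUnion.1 hp
  obtain ⟨q, hq⟩ := mem_iUnion.1 hxV
  obtain ⟨hqB, hxball'⟩ := mem_iUnion.1 hq
  exact (hsub₂ q hqB ⟨hxball', hCs hxC⟩).2 (hsub₁ p hpA ⟨hxball, hCs hxC⟩)

/-- Abbreviation for the Euclidean space used below. -/
abbrev EspN (n : ℕ) := EuclideanSpace ℝ (Fin n)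


/-- A pinched cylindrical graph `M` over the `x₁`-axis inside the solid
cylinder `C_r ⊂ ℝ^{n+1} = ℝ × ℝⁿ`, given by a continuous height function
`u : ([−r,r] \ {0}) × S^{n−1} → (0, r)` with `sup_ω u(x₁,ω)/|x₁| → 0` as `x₁ → 0`,
together with the pinch point `0`, locally disconnects `C_r`: the two axis points
`p₋ = (−r/2, 0)` and `p₊ = (r/2, 0)` lie in `C_r \ M` and belong to different connected
components of `C_r \ M`. -/
theorem neck_locally_disconnects
    (n : ℕ) (hn : 2 ≤ n) (r : ℝ) (hr : 0 < r)
    (u : ℝ → EuclideanSpace ℝ (Fin n) → ℝ)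
    (hcont : ContinuousOn (fun p : ℝ × EuclideanSpace ℝ (Fin n) => u p.1 p.2)
      ((Icc (-r) r \ {0}) ×ˢ sphere (0 : EuclideanSpace ℝ (Fin n)) 1))
    (hbound : ∀ x₁ ∈ Icc (-r) r \ {0},
      ∀ ω ∈ sphere (0 : EuclideanSpace ℝ (Fin n)) 1, 0 < u x₁ ω ∧ u x₁ ω < r)
    (hpinch : Tendsto
      (fun x₁ : ℝ => ⨆ ω : sphere (0 : EuclideanSpace ℝ (Fin n)) 1, u x₁ (ω : _) / |x₁|)
      (nhdsWithin 0 ({0}ᶜ)) (nhds 0)) :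
    -- `C_r` is the closed solid cylinder, `M` the pinched cylindrical graph
    ∀ Cr M : Set (ℝ × EuclideanSpace ℝ (Fin n)),
      Cr = {p | |p.1| ≤ r ∧ ‖p.2‖ ≤ r} →
      M = {p | ∃ x₁ ω, x₁ ∈ Icc (-r) r ∧ x₁ ≠ 0 ∧
              ω ∈ sphere (0 : EuclideanSpace ℝ (Fin n)) 1 ∧ p = (x₁, u x₁ ω • ω)}
            ∪ {((0 : ℝ), (0 : EuclideanSpace ℝ (Fin n)))} →
      ((-r / 2, (0 : EuclideanSpace ℝ (Fin n))) ∈ Cr \ M ∧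
       (r / 2, (0 : EuclideanSpace ℝ (Fin n))) ∈ Cr \ M ∧
       (r / 2, (0 : EuclideanSpace ℝ (Fin n))) ∉
         connectedComponentIn (Cr \ M) (-r / 2, (0 : EuclideanSpace ℝ (Fin n)))) := by
  intro Cr M hCrdef hMdef
  -- basic facts
  have hsnorm : ∀ ω : EspN n, ω ∈ sphere (0 : EspN n) 1 → ‖ω‖ = 1 := fun ω hω =>
    mem_sphere_zero_iff_norm.1 hω
  have hsphere : ∀ y : EspN n, y ≠ 0 → ‖y‖⁻¹ • y ∈ sphere (0 : EspN n) 1 := fun y hy =>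
    mem_sphere_zero_iff_norm.2 (norm_smul_inv_norm hy)
  have hCrIcc : ∀ p : ℝ × EspN n, p ∈ Cr → p.1 ∈ Icc (-r) r := by
    intro p hp
    rw [hCrdef] at hp
    exact mem_Icc.2 (abs_le.1 hp.1)
  -- axis points are in Cr \ M
  have haxis : ∀ t : ℝ, t ≠ 0 → |t| ≤ r → ((t, (0 : EspN n)) : ℝ × EspN n) ∈ Cr \ M := by
    intro t ht htr
    rw [hCrdef, hMdef]
    refine ⟨⟨by simpa using htr, by simp [hr.le]⟩, ?_⟩
    rintro (⟨x₁, ω, hx₁, hx₁0, hω, heq⟩ | h)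
    · rw [Prod.ext_iff] at heq
      have h2 : (0 : EspN n) = u x₁ ω • ω := heq.2
      have hpos : 0 < u x₁ ω := (hbound x₁ ⟨hx₁, hx₁0⟩ ω hω).1
      have : ‖u x₁ ω • ω‖ = u x₁ ω := by
        rw [norm_smul, hsnorm ω hω, mul_one, Real.norm_eq_abs, abs_of_pos hpos]
      rw [← h2] at this
      simp at this
      exact absurd this.symm (ne_of_gt hpos)
    · exact ht (by simpa using congrArg Prod.fst (mem_singleton_iff.1 h))
  have hpm : ((-r / 2, (0 : EspN n)) : ℝ × EspN n) ∈ Cr \ M :=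
    haxis (-r / 2) (by intro h; nlinarith) (by rw [abs_le]; constructor <;> linarith)
  have hpp : ((r / 2, (0 : EspN n)) : ℝ × EspN n) ∈ Cr \ M :=
    haxis (r / 2) (by intro h; nlinarith) (by rw [abs_le]; constructor <;> linarith)
  -- points not on graph
  have hnotM : ∀ q : ℝ × EspN n, q ∈ Cr \ M → q.1 ≠ 0 → q.2 ≠ 0 →
      u q.1 (‖q.2‖⁻¹ • q.2) ≠ ‖q.2‖ := by
    intro q hq hq1 hq2 heq
    apply hq.2
    rw [hMdef]
    refine Or.inl ⟨q.1, ‖q.2‖⁻¹ • q.2, hCrIcc q hq.1, hq1, hsphere q.2 hq2, ?_⟩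
    rw [heq, smul_inv_smul₀ (norm_ne_zero_iff.2 hq2)]
  -- the separating set
  set A : Set (ℝ × EspN n) := {p | p ∈ Cr \ M ∧ p.1 < 0 ∧
      (p.2 = 0 ∨ ‖p.2‖ < u p.1 (‖p.2‖⁻¹ • p.2))} with hA
  -- continuity of the radial gap on S
  set S : Set (ℝ × EspN n) := {p | (p.1 ∈ Icc (-r) r ∧ p.1 ≠ 0) ∧ p.2 ≠ 0} with hS
  have hφ : ContinuousOn (fun p : ℝ × EspN n => (‖p.2‖⁻¹ • p.2 : EspN n)) S :=
    (continuous_snd.norm.continuousOn.inv₀ fun p hp => norm_ne_zero_iff.2 hp.2).smul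
      continuous_snd.continuousOn
  have hg : ContinuousOn (fun p : ℝ × EspN n => u p.1 (‖p.2‖⁻¹ • p.2) - ‖p.2‖) S := by
    refine ContinuousOn.sub ?_ continuous_snd.norm.continuousOn
    have hmaps : Set.MapsTo (fun p : ℝ × EspN n => ((p.1, ‖p.2‖⁻¹ • p.2) : ℝ × EspN n)) S
        ((Icc (-r) r \ {0}) ×ˢ sphere (0 : EuclideanSpace ℝ (Fin n)) 1) :=
      fun p hp => ⟨⟨hp.1.1, hp.1.2⟩, hsphere p.2 hp.2⟩
    exact hcont.comp (continuous_fst.continuousOn.prodMk hφ) hmaps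
  -- sign persistence lemmas
  have hpos : ∀ p₀ ∈ S, ‖p₀.2‖ < u p₀.1 (‖p₀.2‖⁻¹ • p₀.2) →
      ∃ ε > 0, ∀ q, dist q p₀ < ε → q ∈ S → ‖q.2‖ < u q.1 (‖q.2‖⁻¹ • q.2) := by
    intro p₀ hp₀ hlt
    have hcw := hg p₀ hp₀
    have h1 : ∀ᶠ q in nhdsWithin p₀ S, 0 < u q.1 (‖q.2‖⁻¹ • q.2) - ‖q.2‖ :=
      hcw.eventually (lt_mem_nhds (by linarith))
    rw [eventually_iff, Metric.mem_nhdsWithin_iff] at h1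
    obtain ⟨ε, hε, hsub⟩ := h1
    exact ⟨ε, hε, fun q hq hqS => by have := hsub ⟨mem_ball.2 hq, hqS⟩; simp only [mem_setOf_eq] at this; linarith⟩
  have hneg : ∀ p₀ ∈ S, u p₀.1 (‖p₀.2‖⁻¹ • p₀.2) < ‖p₀.2‖ →
      ∃ ε > 0, ∀ q, dist q p₀ < ε → q ∈ S → u q.1 (‖q.2‖⁻¹ • q.2) < ‖q.2‖ := by
    intro p₀ hp₀ hlt
    have hcw := hg p₀ hp₀
    have h1 : ∀ᶠ q in nhdsWithin p₀ S, u q.1 (‖q.2‖⁻¹ • q.2) - ‖q.2‖ < 0 :=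
      hcw.eventually (gt_mem_nhds (by linarith))
    rw [eventually_iff, Metric.mem_nhdsWithin_iff] at h1
    obtain ⟨ε, hε, hsub⟩ := h1
    exact ⟨ε, hε, fun q hq hqS => by have := hsub ⟨mem_ball.2 hq, hqS⟩; simp only [mem_setOf_eq] at this; linarith⟩
  -- pointwise pinch bound
  have hpb : ∀ c : ℝ, 0 < c → ∃ δ > 0, ∀ x₁ : ℝ, x₁ ≠ 0 → |x₁| < δ →
      x₁ ∈ Icc (-r) r → ∀ ω ∈ sphere (0 : EspN n) 1, u x₁ ω < c * |x₁| := by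
    intro c hc
    obtain ⟨δ, hδ, h2⟩ := Metric.tendsto_nhdsWithin_nhds.1 hpinch c hc
    refine ⟨δ, hδ, fun x₁ hx₁ hx₁δ hx₁I ω hω => ?_⟩
    have hsup : |(⨆ ω : sphere (0 : EspN n) 1, u x₁ (ω : EspN n) / |x₁|)| < c := by
      simpa [Real.dist_eq] using h2 (x := x₁) hx₁ (by simpa [Real.dist_eq] using hx₁δ)
    have hbdd : BddAbove (Set.range fun ω : sphere (0 : EspN n) 1 => u x₁ (ω : EspN n) / |x₁|) := by
      have hmap : Set.MapsTo (fun y : EspN n => ((x₁, y) : ℝ × EspN n))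
          (sphere (0 : EspN n) 1) ((Icc (-r) r \ {0}) ×ˢ sphere (0 : EspN n) 1) :=
        fun ω hω => ⟨⟨hx₁I, hx₁⟩, hω⟩
      have hcs : ContinuousOn (fun y : EspN n => u x₁ y / |x₁|) (sphere (0 : EspN n) 1) :=
        (hcont.comp (Continuous.prodMk_right x₁).continuousOn hmap).div_const _
      exact (isCompact_range hcs.restrict).bddAbove
    have hle : u x₁ ω / |x₁| ≤ ⨆ ω : sphere (0 : EspN n) 1, u x₁ (ω : EspN n) / |x₁| :=
      le_ciSup hbdd ⟨ω, hω⟩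
    have habs : 0 < |x₁| := abs_pos.2 hx₁
    rw [div_le_iff₀ habs] at hle
    calc u x₁ ω ≤ _ := hle
      _ < c * |x₁| := by
        have := le_abs_self (⨆ ω : sphere (0 : EspN n) 1, u x₁ (ω : EspN n) / |x₁|)
        nlinarith
  -- local property of A
  have hAloc : ∀ p₀ ∈ A, ∃ ε > 0, ball p₀ ε ∩ (Cr \ M) ⊆ A := by
    intro p₀ hp₀
    obtain ⟨hp₀s, hp₀neg, hp₀in⟩ := hp₀
    by_cases hp₀2 : p₀.2 = 0
    · -- axis point: compactness argument
      set a := p₀.1 with ha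
      set δ : ℝ := -a / 2 with hδdef
      have hδ : 0 < δ := by simp only [hδdef]; linarith
      have haI : a ∈ Icc (-r) r := hCrIcc p₀ hp₀s.1
      have haI1 : -r ≤ a := haI.1
      set K : Set (ℝ × EspN n) := Icc (max (-r) (a - δ)) (a + δ) ×ˢ sphere (0 : EspN n) 1 with hK
      have hKD : K ⊆ (Icc (-r) r \ {0}) ×ˢ sphere (0 : EspN n) 1 := by
        intro q hq
        obtain ⟨hq1, hq2⟩ := hq
        have h1 : -r ≤ q.1 := le_trans (le_max_left _ _) hq1.1
        have h2 : q.1 ≤ a + δ := hq1.2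
        have h3 : a + δ < 0 := by simp only [hδdef]; linarith
        refine ⟨⟨mem_Icc.2 ⟨h1, by linarith⟩, ?_⟩, hq2⟩
        simp only [mem_singleton_iff]
        intro h0
        rw [h0] at h2
        linarith
      have hKc : IsCompact K := isCompact_Icc.prod (isCompact_sphere _ _)
      have hKne : K.Nonempty := by
        have : Nonempty (Fin n) := ⟨⟨0, by omega⟩⟩
        have hsne : (sphere (0 : EspN n) 1).Nonempty := NormedSpace.sphere_nonempty.2 zero_le_one
        obtain ⟨ω₀, hω₀⟩ := hsne
        exact ⟨(a, ω₀), ⟨mem_Icc.2 ⟨max_le haI1 (by linarith), by linarith⟩, hω₀⟩⟩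
      obtain ⟨q₀, hq₀K, hmin⟩ := hKc.exists_isMinOn hKne (hcont.mono hKD)
      set m := u q₀.1 q₀.2 with hm
      have hm0 : 0 < m := (hbound q₀.1 (hKD hq₀K).1 q₀.2 (hKD hq₀K).2).1
      refine ⟨min δ m, lt_min hδ hm0, ?_⟩
      rintro q ⟨hqb, hqs⟩
      have hd1 : dist q.1 p₀.1 < min δ m := lt_of_le_of_lt (le_max_left _ _)
        (by rw [← Prod.dist_eq]; exact mem_ball.1 hqb)
      have hd2 : dist q.2 p₀.2 < min δ m := lt_of_le_of_lt (le_max_right _ _)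
        (by rw [← Prod.dist_eq]; exact mem_ball.1 hqb)
      have hq1a : |q.1 - a| < δ := lt_of_lt_of_le (by rw [← Real.dist_eq]; exact hd1) (min_le_left _ _)
      have hq1I : q.1 ∈ Icc (max (-r) (a - δ)) (a + δ) := by
        rw [abs_lt] at hq1a
        exact mem_Icc.2 ⟨max_le (hCrIcc q hqs.1).1 (by linarith), by linarith⟩
      have hq1neg : q.1 < 0 := by
        have h2 := hq1I.2
        simp only [hδdef] at h2
        linarith
      refine ⟨hqs, hq1neg, ?_⟩
      by_cases hq2 : q.2 = 0
      · exact Or.inl hq2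
      · refine Or.inr ?_
        have hqn : ‖q.2‖ < m := by
          have hz : dist q.2 p₀.2 = ‖q.2‖ := by rw [hp₀2, dist_zero_right]
          rw [hz] at hd2
          exact lt_of_lt_of_le hd2 (min_le_right _ _)
        have hKmem : ((q.1, ‖q.2‖⁻¹ • q.2) : ℝ × EspN n) ∈ K := ⟨hq1I, hsphere q.2 hq2⟩
        exact lt_of_lt_of_le hqn (isMinOn_iff.1 hmin _ hKmem)
    · -- non-axis inside point: continuity argument
      have hin : ‖p₀.2‖ < u p₀.1 (‖p₀.2‖⁻¹ • p₀.2) := hp₀in.resolve_left hp₀2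
      have hp₀S : p₀ ∈ S := ⟨⟨hCrIcc p₀ hp₀s.1, ne_of_lt hp₀neg⟩, hp₀2⟩
      obtain ⟨ε₁, hε₁, hball⟩ := hpos p₀ hp₀S hin
      refine ⟨min ε₁ (-p₀.1), lt_min hε₁ (by linarith), ?_⟩
      rintro q ⟨hqb, hqs⟩
      have hdq : dist q p₀ < min ε₁ (-p₀.1) := mem_ball.1 hqb
      have hd1 : dist q.1 p₀.1 < -p₀.1 := lt_of_le_of_lt (le_max_left _ _)
        (by rw [← Prod.dist_eq]; exact lt_of_lt_of_le hdq (min_le_right _ _))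
      have hq1neg : q.1 < 0 := by
        rw [Real.dist_eq, abs_lt] at hd1; linarith
      refine ⟨hqs, hq1neg, ?_⟩
      by_cases hq2 : q.2 = 0
      · exact Or.inl hq2
      · exact Or.inr (hball q (lt_of_lt_of_le hdq (min_le_left _ _))
          ⟨⟨hCrIcc q hqs.1, ne_of_lt hq1neg⟩, hq2⟩)
  -- local property of the complement of A
  have hBloc : ∀ p₀ ∈ (Cr \ M) \ A, ∃ ε > 0, ball p₀ ε ∩ (Cr \ M) ⊆ (Cr \ M) \ A := by
    intro p₀ hp₀
    obtain ⟨hp₀s, hp₀A⟩ := hp₀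
    rcases lt_trichotomy p₀.1 0 with h1 | h1 | h1
    · -- left outside point
      have hp₀2 : p₀.2 ≠ 0 := by
        intro h
        exact hp₀A ⟨hp₀s, h1, Or.inl h⟩
      have hnin : ¬ ‖p₀.2‖ < u p₀.1 (‖p₀.2‖⁻¹ • p₀.2) := by
        intro h
        exact hp₀A ⟨hp₀s, h1, Or.inr h⟩
      have hout : u p₀.1 (‖p₀.2‖⁻¹ • p₀.2) < ‖p₀.2‖ :=
        lt_of_le_of_ne (not_lt.1 hnin) (hnotM p₀ hp₀s (ne_of_lt h1) hp₀2)
      have hp₀S : p₀ ∈ S := ⟨⟨hCrIcc p₀ hp₀s.1, ne_of_lt h1⟩, hp₀2⟩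
      obtain ⟨ε₁, hε₁, hball⟩ := hneg p₀ hp₀S hout
      have hn2 : 0 < ‖p₀.2‖ := norm_pos_iff.2 hp₀2
      refine ⟨min ε₁ (min (-p₀.1) ‖p₀.2‖), lt_min hε₁ (lt_min (by linarith) hn2), ?_⟩
      rintro q ⟨hqb, hqs⟩
      have hdq := mem_ball.1 hqb
      have hd1 : dist q.1 p₀.1 < -p₀.1 := lt_of_le_of_lt (le_max_left _ _)
        (by rw [← Prod.dist_eq]; exact lt_of_lt_of_le hdq (le_trans (min_le_right _ _) (min_le_left _ _)))
      have hd2 : dist q.2 p₀.2 < ‖p₀.2‖ := lt_of_le_of_lt (le_max_right _ _)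
        (by rw [← Prod.dist_eq]; exact lt_of_lt_of_le hdq (le_trans (min_le_right _ _) (min_le_right _ _)))
      have hq1neg : q.1 < 0 := by rw [Real.dist_eq, abs_lt] at hd1; linarith
      have hq2 : q.2 ≠ 0 := by
        intro h
        rw [h, dist_zero_left] at hd2
        exact lt_irrefl _ hd2
      have hqout := hball q (lt_of_lt_of_le hdq (min_le_left _ _))
        ⟨⟨hCrIcc q hqs.1, ne_of_lt hq1neg⟩, hq2⟩
      refine ⟨hqs, ?_⟩
      rintro ⟨-, -, (h | h)⟩
      · exact hq2 h
      · linarith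
    · -- pinch region point (x₁ = 0)
      have hp₀2 : p₀.2 ≠ 0 := by
        intro h
        apply hp₀s.2
        rw [hMdef]
        exact Or.inr (mem_singleton_iff.2 (Prod.ext h1 h))
      have hn2 : 0 < ‖p₀.2‖ := norm_pos_iff.2 hp₀2
      set c : ℝ := ‖p₀.2‖ / (2 * (r + 1)) with hc
      have hc0 : 0 < c := by positivity
      obtain ⟨δ, hδ, hδp⟩ := hpb c hc0
      refine ⟨min δ (‖p₀.2‖ / 2), lt_min hδ (by linarith), ?_⟩
      rintro q ⟨hqb, hqs⟩
      have hdq := mem_ball.1 hqb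
      have hd1 : dist q.1 p₀.1 < δ := lt_of_le_of_lt (le_max_left _ _)
        (by rw [← Prod.dist_eq]; exact lt_of_lt_of_le hdq (min_le_left _ _))
      have hd2 : dist q.2 p₀.2 < ‖p₀.2‖ / 2 := lt_of_le_of_lt (le_max_right _ _)
        (by rw [← Prod.dist_eq]; exact lt_of_lt_of_le hdq (min_le_right _ _))
      have hq2n : ‖p₀.2‖ / 2 < ‖q.2‖ := by
        have hb := norm_sub_norm_le p₀.2 q.2
        rw [dist_eq_norm, norm_sub_rev] at hd2
        linarith
      refine ⟨hqs, ?_⟩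
      rintro ⟨-, hq1neg, (h | h)⟩
      · rw [h] at hq2n
        simp only [norm_zero] at hq2n
        linarith
      · have hq1 : q.1 ≠ 0 := ne_of_lt hq1neg
        have hq1δ : |q.1| < δ := by
          rw [Real.dist_eq, h1, sub_zero] at hd1; exact hd1
        have hq2 : q.2 ≠ 0 := by
          intro hh; rw [hh] at hq2n; simp only [norm_zero] at hq2n; linarith
        have hub := hδp q.1 hq1 hq1δ (hCrIcc q hqs.1) _ (hsphere q.2 hq2)
        have hq1r : |q.1| ≤ r := by
          have := hCrIcc q hqs.1
          rw [abs_le]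
          exact ⟨this.1, this.2⟩
        have hcr : c * |q.1| ≤ c * r := mul_le_mul_of_nonneg_left hq1r hc0.le
        have hcrlt : c * r < ‖p₀.2‖ / 2 := by
          rw [hc, div_mul_eq_mul_div, div_lt_div_iff₀ (by linarith) (by norm_num)]
          nlinarith
        linarith
    · -- right point
      refine ⟨p₀.1, h1, ?_⟩
      rintro q ⟨hqb, hqs⟩
      have hd1 : dist q.1 p₀.1 < p₀.1 := lt_of_le_of_lt (le_max_left _ _)
        (by rw [← Prod.dist_eq]; exact mem_ball.1 hqb)
      have hq1pos : 0 < q.1 := by rw [Real.dist_eq, abs_lt] at hd1; linarith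
      exact ⟨hqs, fun hqA => by have := hqA.2.1; linarith⟩
  -- conclusion
  refine ⟨hpm, hpp, ?_⟩
  refine ball_sep (fun p hp => hp.1) ?_ hpp ?_ hAloc hBloc
  · exact ⟨hpm, by simp only; linarith, Or.inl rfl⟩
  · intro h
    have h2 : (-r / 2 : ℝ) < 0 := by linarith
    have := h.2.1
    simp only at this
    linarith
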